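/- Let H be a Tonelli Hamiltonian on ℝⁿ × ℝⁿ with associated Tonelli Lagrangian L, and let λ > 0. Let u : ℝⁿ → ℝ be a C² function satisfying λu(x) + H(x, Du(x)) = 0 for all x ∈ ℝⁿ. Let (x,p) : I → ℝⁿ × ℝⁿ be a C¹ solution of the λ-discounted Hamiltonian equations with p(t) = Du(x(t)) for all t ∈ I. Then for every [a,b] ⊆ I the curve x|_{[a,b]} is (u,L)-λ-calibrated: e^{λb} u(x(b)) − e^{λa} u(x(a)) = ∫_a^b e^{λt} L(x(t), ẋ(t)) dt. -/

import Mathlib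

open Set Filter MeasureTheory Real

noncomputable section

abbrev E (n : ℕ) : Type := EuclideanSpace ℝ (Fin n)

noncomputable def Hp {n : ℕ} (H : E n × E n → ℝ) (x p : E n) : E n :=
  gradient (fun q => H (x, q)) p

noncomputable def Hx {n : ℕ} (H : E n × E n → ℝ) (x p : E n) : E n :=
  gradient (fun y => H (y, p)) x

noncomputable def Lv {n : ℕ} (L : E n × E n → ℝ) (x v : E n) : E n :=
  gradient (fun w => L (x, w)) v

noncomputable def Lx {n : ℕ} (L : E n × E n → ℝ) (x v : E n) : E n :=
  gradient (fun y => L (y, v)) x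

/-- A Tonelli Hamiltonian. -/
def Tonelli {n : ℕ} (H : E n × E n → ℝ) : Prop :=
  ContDiff ℝ 2 H ∧
  (∀ x p v : E n, v ≠ 0 → 0 < (inner ℝ (fderiv ℝ (fun q => Hp H x q) p v) v : ℝ)) ∧
  (∀ A : ℝ, ∃ B : ℝ, 0 ≤ B ∧ ∀ x p : E n, A * ‖p‖ - B ≤ H (x, p))

/-- `L` is the Lagrangian associated to `H` by fiberwise Legendre-Fenchel transform. -/
def IsLagrangianOf {n : ℕ} (L H : E n × E n → ℝ) : Prop :=
  ∀ x v : E n, IsLUB {r : ℝ | ∃ p : E n, r = (inner ℝ p v : ℝ) - H (x, p)} (L (x, v))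

/-- A continuous piecewise `C¹` curve on `[a,b]`, with derivative `γ'`. -/
def PiecewiseC1 {n : ℕ} (a b : ℝ) (γ γ' : ℝ → E n) : Prop :=
  ContinuousOn γ (Set.Icc a b) ∧
  ∃ s : Finset ℝ,
    (∀ t ∈ Set.Icc a b, t ∉ s → HasDerivAt γ (γ' t) t) ∧
    ContinuousOn γ' (Set.Icc a b \ s) ∧
    ∃ C : ℝ, ∀ t ∈ Set.Icc a b, ‖γ' t‖ ≤ C

/-- `u` is λ-dominated by `L`. -/
def Dominated {n : ℕ} (lam : ℝ) (L : E n × E n → ℝ) (u : E n → ℝ) : Prop :=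
  ∀ a b : ℝ, a < b → ∀ γ γ' : ℝ → E n, PiecewiseC1 a b γ γ' →
    Real.exp (lam * b) * u (γ b) - Real.exp (lam * a) * u (γ a) ≤
      ∫ t in a..b, Real.exp (lam * t) * L (γ t, γ' t)

/-- `γ` is `(u,L)`-λ-calibrated on `[a,b]`. -/
def Calibrated {n : ℕ} (lam : ℝ) (L : E n × E n → ℝ) (u : E n → ℝ)
    (a b : ℝ) (γ γ' : ℝ → E n) : Prop :=
  Real.exp (lam * b) * u (γ b) - Real.exp (lam * a) * u (γ a) =
    ∫ t in a..b, Real.exp (lam * t) * L (γ t, γ' t)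

def intVec {n : ℕ} (k : Fin n → ℤ) : E n :=
  (EuclideanSpace.equiv (Fin n) ℝ).symm (fun i => (k i : ℝ))



open InnerProductSpace in
lemma contDiff_partial' {n : ℕ} {H : E n × E n → ℝ} (hC : ContDiff ℝ 2 H) (x : E n) :
    ContDiff ℝ 2 (fun q : E n => H (x, q)) :=
  hC.comp (contDiff_const.prodMk contDiff_id)

open InnerProductSpace in
lemma conv_ineq' {n : ℕ} {H : E n × E n → ℝ} (hC : ContDiff ℝ 2 H)
    (hpos : ∀ x p v : E n, v ≠ 0 → 0 < (inner ℝ (fderiv ℝ (fun q => Hp H x q) p v) v : ℝ))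
    (x p q : E n) :
    H (x, p) + (inner ℝ (Hp H x p) (q - p) : ℝ) ≤ H (x, q) := by
  rcases eq_or_ne q p with rfl | hne
  · simp
  set w := q - p with hw
  have hw0 : w ≠ 0 := sub_ne_zero.mpr hne
  have hdiffH : Differentiable ℝ (fun q' : E n => H (x, q')) :=
    (contDiff_partial' hC x).differentiable (by norm_num)
  have hg : ContDiff ℝ 1 (fun q' : E n => Hp H x q') := by
    have h1 : ContDiff ℝ 1 (fderiv ℝ (fun q' : E n => H (x, q'))) :=
      (contDiff_partial' hC x).fderiv_right (le_refl 2)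
    exact ((toDual ℝ (E n)).symm.contDiff.comp h1 : _)
  set c : ℝ → E n := fun s => p + s • w with hc_def
  have hc : ∀ s : ℝ, HasDerivAt c w s := by
    intro s
    simpa [hc_def] using ((hasDerivAt_id s).smul_const w).const_add p
  set ψ : ℝ → ℝ := fun s => (inner ℝ (Hp H x (c s)) w : ℝ) with hψ_def
  have hφ : ∀ s : ℝ, HasDerivAt (fun s => H (x, c s)) (ψ s) s := by
    intro s
    have hgrad : HasGradientAt (fun q' : E n => H (x, q')) (Hp H x (c s)) (c s) :=
      (hdiffH (c s)).hasGradientAt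
    have := hgrad.hasFDerivAt.comp_hasDerivAt s (hc s)
    simpa [hψ_def, toDual_apply_apply, Function.comp_def] using this
  have hψd : ∀ s : ℝ, HasDerivAt ψ
      ((inner ℝ (fderiv ℝ (fun q' => Hp H x q') (c s) w) w : ℝ)) s := by
    intro s
    have hgd : HasFDerivAt (fun q' => Hp H x q') (fderiv ℝ (fun q' => Hp H x q') (c s)) (c s) :=
      ((hg.differentiable one_ne_zero) (c s)).hasFDerivAt
    have h1 : HasDerivAt (fun s => Hp H x (c s))
        (fderiv ℝ (fun q' => Hp H x q') (c s) w) s := hgd.comp_hasDerivAt s (hc s)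
    simpa [hψ_def] using HasDerivAt.inner ℝ h1 (hasDerivAt_const s w)
  have hmono : StrictMono ψ :=
    strictMono_of_hasDerivAt_pos hψd (fun s => hpos x (c s) w hw0)
  obtain ⟨c₀, hc₀, heq⟩ := exists_hasDerivAt_eq_slope (fun s => H (x, c s)) ψ one_pos
    ((hC.continuous.comp (by continuity)).continuousOn) (fun s _ => hφ s)
  have hc1 : c 1 = q := by simp [hc_def, hw]
  have hc0 : c 0 = p := by simp [hc_def]
  have h01 : ψ 0 ≤ ψ c₀ := (hmono hc₀.1).le
  have hψ0 : ψ 0 = (inner ℝ (Hp H x p) w : ℝ) := by rw [hψ_def]; simp [hc0]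
  rw [hc1, hc0] at heq
  have : ψ c₀ = H (x, q) - H (x, p) := by rw [heq]; ring
  linarith [hψ0 ▸ h01, this ▸ h01]

lemma legendre' {n : ℕ} {H L : E n × E n → ℝ} (hC : ContDiff ℝ 2 H)
    (hpos : ∀ x p v : E n, v ≠ 0 → 0 < (inner ℝ (fderiv ℝ (fun q => Hp H x q) p v) v : ℝ))
    (hLH : IsLagrangianOf L H) (x p : E n) :
    L (x, Hp H x p) = (inner ℝ p (Hp H x p) : ℝ) - H (x, p) := by
  set v := Hp H x p with hv
  have hub : ∀ r ∈ {r : ℝ | ∃ q : E n, r = (inner ℝ q v : ℝ) - H (x, q)},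
      r ≤ (inner ℝ p v : ℝ) - H (x, p) := by
    rintro r ⟨q, rfl⟩
    have h1 := conv_ineq' hC hpos x p q
    have h2 : (inner ℝ v (q - p) : ℝ) = (inner ℝ q v : ℝ) - (inner ℝ p v : ℝ) := by
      rw [inner_sub_right, real_inner_comm v q, real_inner_comm v p]
    rw [← hv] at h1
    linarith
  exact le_antisymm ((hLH x v).2 hub) ((hLH x v).1 ⟨p, rfl⟩)

open InnerProductSpace in
lemma hp_cont' {n : ℕ} {H : E n × E n → ℝ} (hC : ContDiff ℝ 2 H) :
    Continuous (fun z : E n × E n => Hp H z.1 z.2) := by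
  have h1 : Continuous (fderiv ℝ H) := hC.continuous_fderiv (by norm_num)
  have h2 : Continuous (fun z : E n × E n =>
      (fderiv ℝ H z).comp (ContinuousLinearMap.inr ℝ (E n) (E n))) :=
    h1.clm_comp continuous_const
  have h3 : ∀ z : E n × E n, Hp H z.1 z.2 =
      (toDual ℝ (E n)).symm ((fderiv ℝ H z).comp (ContinuousLinearMap.inr ℝ (E n) (E n))) := by
    rintro ⟨y, q⟩
    have hd : fderiv ℝ (fun q' : E n => H (y, q')) q =
        (fderiv ℝ H (y, q)).comp (ContinuousLinearMap.inr ℝ (E n) (E n)) :=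
      (((hC.differentiable (by norm_num)) (y, q)).hasFDerivAt.comp q
        (hasFDerivAt_prodMk_right y q)).fderiv
    simp only [Hp, gradient, hd]
  rw [show (fun z : E n × E n => Hp H z.1 z.2) = fun z =>
      (toDual ℝ (E n)).symm ((fderiv ℝ H z).comp (ContinuousLinearMap.inr ℝ (E n) (E n)))
    from funext h3]
  exact (toDual ℝ (E n)).symm.continuous.comp h2


/-- If `u` is a `C²` solution of `λu + H(x,Du) = 0` and `(x,p)` is a solution of
the λ-discounted Hamiltonian equations lying on the graph of `Du`, then the
projected curve is `(u,L)`-λ-calibrated on every `[a,b] ⊆ I`. -/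
theorem stmt_6 {n : ℕ} (hn : 1 ≤ n) (lam : ℝ) (hlam : 0 < lam)
    (H L : E n × E n → ℝ) (hH : Tonelli H) (hLH : IsLagrangianOf L H)
    (u : E n → ℝ) (hu : ContDiff ℝ 2 u)
    (hHJ : ∀ x : E n, lam * u x + H (x, gradient u x) = 0)
    (I : Set ℝ) (x p : ℝ → E n)
    (hx : ∀ t ∈ I, HasDerivAt x (Hp H (x t) (p t)) t)
    (hp : ∀ t ∈ I, HasDerivAt p (-Hx H (x t) (p t) - lam • p t) t)
    (hgr : ∀ t ∈ I, p t = gradient u (x t)) :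
    ∀ a b : ℝ, a ≤ b → Set.Icc a b ⊆ I →
      Real.exp (lam * b) * u (x b) - Real.exp (lam * a) * u (x a) =
        ∫ t in a..b, Real.exp (lam * t) * L (x t, Hp H (x t) (p t)) := by
  intro a b hab hsub
  have hC := hH.1
  have hpos := hH.2.1
  have hud : Differentiable ℝ u := hu.differentiable (by norm_num)
  set F' : ℝ → ℝ := fun t =>
    Real.exp (lam * t) * ((inner ℝ (p t) (Hp H (x t) (p t)) : ℝ) - H (x t, p t)) with hF'
  have hF : ∀ t ∈ Set.uIcc a b,
      HasDerivAt (fun s => Real.exp (lam * s) * u (x s)) (F' t) t := by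
    intro t ht
    rw [Set.uIcc_of_le hab] at ht
    have htI : t ∈ I := hsub ht
    have h1 : HasDerivAt (fun s : ℝ => Real.exp (lam * s)) (lam * Real.exp (lam * t)) t := by
      have := ((hasDerivAt_id t).const_mul lam).exp
      simp only [id, mul_one] at this
      convert this using 1; ring
    have h2 : HasDerivAt (fun s => u (x s)) ((inner ℝ (p t) (Hp H (x t) (p t)) : ℝ)) t := by
      have hgrad : HasGradientAt u (gradient u (x t)) (x t) := (hud (x t)).hasGradientAt
      have h2' := hgrad.hasFDerivAt.comp_hasDerivAt t (hx t htI)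
      simp only [Function.comp_def, InnerProductSpace.toDual_apply_apply, ← hgr t htI] at h2'
      exact h2'
    have h3 := h1.mul h2
    have hH0 : H (x t, p t) = -(lam * u (x t)) := by
      have := hHJ (x t); rw [hgr t htI]; linarith
    refine h3.congr_deriv ?_
    rw [hF']; simp only [hH0]; ring
  have hxc : ContinuousOn x (Set.Icc a b) := fun t ht =>
    ((hx t (hsub ht)).continuousAt).continuousWithinAt
  have hpc : ContinuousOn p (Set.Icc a b) := fun t ht =>
    ((hp t (hsub ht)).continuousAt).continuousWithinAt
  have hv : ContinuousOn (fun t => Hp H (x t) (p t)) (Set.Icc a b) :=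
    (hp_cont' hC).comp_continuousOn (hxc.prodMk hpc)
  have hFc : ContinuousOn F' (Set.Icc a b) := by
    apply ContinuousOn.mul (Continuous.continuousOn (by continuity))
    exact (hpc.inner hv).sub (hC.continuous.comp_continuousOn (hxc.prodMk hpc))
  have hInt : IntervalIntegrable F' volume a b := by
    rw [intervalIntegrable_iff_integrableOn_Icc_of_le hab]
    exact hFc.integrableOn_compact isCompact_Icc
  have hleg := legendre' hC hpos hLH
  simp only [hleg]
  rw [show (fun t => Real.exp (lam * t) *
      ((inner ℝ (p t) (Hp H (x t) (p t)) : ℝ) - H (x t, p t))) = F' from rfl] at *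
  exact (intervalIntegral.integral_eq_sub_of_hasDerivAt hF hInt).symm


end
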